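/- Let L be a modality on E. If f : A ⟶ B is a morphism of E that is uniquely left orthogonal to every L-local morphism of E, then f is L-connected. -/

import Mathlib

open CategoryTheory CategoryTheory.Limits

universe v u

/-- A morphism `l` is uniquely left orthogonal to a morphism `r`. -/
def UniqueLift {C : Type*} [Category C] {A B X Y : C} (l : A ⟶ B) (r : X ⟶ Y) : Prop :=
  ∀ (u : A ⟶ X) (v : B ⟶ Y), u ≫ r = l ≫ v → ∃! d : B ⟶ X, l ≫ d = u ∧ d ≫ r = v

variable (E : Type u) [Category.{v} E] [HasPullbacks E]

/-- A reflective subfibration on a category `E` with pullbacks: a pullback-stable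
assignment of a reflective (full) subcategory `D X ⊆ Over X` for every `X : E`,
with reflector `Lf X` (the composite of the localization onto `D X` and the
inclusion) and unit `η X`, such that pullback functors preserve the subcategories
and the canonical comparison map `L_X (f* p) ⟶ f* (L_Y p)` is an isomorphism;
the latter is expressed by requiring that the pullback of a unit map is an
`L_X`-equivalence, which is equivalent to invertibility of the comparison map. -/
structure ReflectiveSubfibration where
  /-- membership in the reflective subcategory `D X ⊆ Over X` -/
  loc : ∀ {X : E}, Over X → Prop
  /-- the localization functor `L_X : Over X ⥤ Over X` -/
  Lf : ∀ X : E, Over X ⥤ Over X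
  /-- the unit of the localization -/
  η : ∀ X : E, 𝟭 (Over X) ⟶ Lf X
  loc_obj : ∀ (X : E) (p : Over X), loc ((Lf X).obj p)
  reflect : ∀ (X : E) (p d : Over X), loc d → ∀ g : p ⟶ d,
      ∃! h : (Lf X).obj p ⟶ d, (η X).app p ≫ h = g
  loc_pullback : ∀ {X Y : E} (f : X ⟶ Y) (p : Over Y),
      loc p → loc ((Over.pullback f).obj p)
  comparison_isIso : ∀ {X Y : E} (f : X ⟶ Y) (p : Over Y),
      IsIso ((Lf X).map ((Over.pullback f).map ((η Y).app p)))

variable {E}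

namespace ReflectiveSubfibration

variable (rsf : ReflectiveSubfibration E)

/-- A morphism `p : A ⟶ X` of `E` is `L`-local if it lies in `D X` as an object of `Over X`. -/
def LocalMap {A X : E} (p : A ⟶ X) : Prop := rsf.loc (Over.mk p)

/-- A morphism of `Over X` is an `L_X`-equivalence if `L_X` inverts it. -/
def Lequiv {X : E} {p q : Over X} (α : p ⟶ q) : Prop := IsIso ((rsf.Lf X).map α)

/-- A morphism `f : A ⟶ X` is `L`-connected if `L_X f` is a terminal object of `Over X`,
i.e. its structure morphism to `X` is an isomorphism. -/
def Connected {A X : E} (f : A ⟶ X) : Prop := IsIso ((rsf.Lf X).obj (Over.mk f)).hom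

/-- A morphism is `L`-separated if its diagonal is `L`-local. -/
def Separated {A X : E} (p : A ⟶ X) : Prop := rsf.LocalMap (pullback.diagonal p)

end ReflectiveSubfibration

/-- For a modality, a morphism which is uniquely left orthogonal to every `L`-local
morphism is `L`-connected. -/
theorem connected_of_orth (rsf : ReflectiveSubfibration E)
    (hmod : ∀ {X Y Z : E} (f : X ⟶ Y) (g : Y ⟶ Z),
      rsf.LocalMap f → rsf.LocalMap g → rsf.LocalMap (f ≫ g))
    {A B : E} (f : A ⟶ B)
    (h : ∀ {X Y : E} (r : X ⟶ Y), rsf.LocalMap r → UniqueLift f r) :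
    rsf.Connected f := by
  set p : Over B := Over.mk f with hp
  set L : Over B := (rsf.Lf B).obj p with hL
  have hloc : rsf.LocalMap L.hom := by
    have hmk : Over.mk L.hom = L := by
      cases L with
      | mk left right hom => cases right; rfl
    show rsf.loc (Over.mk L.hom)
    rw [hmk]
    exact rsf.loc_obj B p
  have hw : ((rsf.η B).app p).left ≫ L.hom = f ≫ 𝟙 B := by
    rw [Category.comp_id]; exact Over.w ((rsf.η B).app p)
  obtain ⟨d, ⟨hd1, hd2⟩, -⟩ := h L.hom hloc ((rsf.η B).app p).left (𝟙 B) hw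
  have hmap : (L.hom ≫ d) ≫ L.hom = L.hom := by
    rw [Category.assoc, hd2]; simp
  let e : L ⟶ L := Over.homMk (L.hom ≫ d) hmap
  obtain ⟨k, hk, huniq⟩ := rsf.reflect B p L (rsf.loc_obj B p) ((rsf.η B).app p)
  have he : (rsf.η B).app p ≫ e = (rsf.η B).app p := by
    ext
    have : ((rsf.η B).app p).left ≫ L.hom = f := by
      simpa using hw
    simp only [Over.comp_left, Over.homMk_left, e, ← Category.assoc, this, hd1]
  have h1 : e = 𝟙 L := (huniq e he).trans (huniq (𝟙 L) (Category.comp_id _)).symm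
  have h2 : L.hom ≫ d = 𝟙 L.left := congrArg CommaMorphism.left h1
  show IsIso L.hom
  exact ⟨d, h2, hd2⟩
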